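/- Let h be a nonzero real number, let A and B be n×n real matrices, and define the matrix-valued strain field X(s) = A + (s − h/2)·B for s ∈ [0,h]. Then the fourth-order Magnus twist Ω := ∫₀ʰ X(s) ds − (1/h)·⁅∫₀ʰ (s − h/2)·X(s) ds, ∫₀ʰ X(s) ds⁆ (where ⁅·,·⁆ is the matrix commutator ⁅M,N⁆ = MN − NM) satisfies Ω = h·A − (h³/12)·⁅B, A⁆. -/

import Mathlib

open intervalIntegral

attribute [local instance] Matrix.normedAddCommGroup Matrix.normedSpace

lemma int1 (h : ℝ) : (∫ s in (0:ℝ)..h, (s - h / 2)) = 0 := by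
  simp [integral_sub intervalIntegrable_id (intervalIntegrable_const), integral_id]
  ring

lemma int2 (h : ℝ) : (∫ s in (0:ℝ)..h, (s - h / 2) ^ 2) = h ^ 3 / 12 := by
  have : ∀ s : ℝ, (s - h / 2) ^ 2 = s ^ 2 - h * s + (h/2)^2 := by intro s; ring
  simp_rw [this]
  have h1 : IntervalIntegrable (fun s : ℝ => s ^ 2) MeasureTheory.volume 0 h :=
    (continuous_pow 2).intervalIntegrable _ _
  have h2 : IntervalIntegrable (fun s : ℝ => h * s) MeasureTheory.volume 0 h :=
    (continuous_const.mul continuous_id).intervalIntegrable _ _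
  rw [integral_add (h1.sub h2) intervalIntegrable_const, integral_sub h1 h2,
    integral_const, integral_const_mul, integral_id, integral_pow]
  push_cast
  simp only [smul_eq_mul]
  ring

/-- **Fourth-order Magnus twist for a linear strain field.**
For `h ≠ 0` and matrices `A`, `B`, with strain field `X s = A + (s - h/2) • B` on `[0, h]`,
the fourth-order Magnus twist
`Ω = ∫₀ʰ X(s) ds − (1/h) • ⁅∫₀ʰ (s − h/2) • X(s) ds, ∫₀ʰ X(s) ds⁆`
equals `h • A − (h³/12) • ⁅B, A⁆`. -/
theorem magnus_fourth_order_linear_strain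
    {n : ℕ} (h : ℝ) (hh : h ≠ 0) (A B : Matrix (Fin n) (Fin n) ℝ) :
    (∫ s in (0:ℝ)..h, (A + (s - h / 2) • B)) -
      (1 / h) • ⁅∫ s in (0:ℝ)..h, (s - h / 2) • (A + (s - h / 2) • B),
                 ∫ s in (0:ℝ)..h, (A + (s - h / 2) • B)⁆
      = h • A - (h ^ 3 / 12) • ⁅B, A⁆ := by
  have hc : Continuous fun s : ℝ => (s - h / 2) • B :=
    (continuous_id.sub continuous_const).smul continuous_const
  have e1 : (∫ s in (0:ℝ)..h, (A + (s - h / 2) • B)) = h • A := by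
    rw [integral_add intervalIntegrable_const (hc.intervalIntegrable _ _),
      integral_const, intervalIntegral.integral_smul_const, int1, zero_smul, add_zero, sub_zero]
  have e2 : (∫ s in (0:ℝ)..h, (s - h / 2) • (A + (s - h / 2) • B)) = (h ^ 3 / 12) • B := by
    have : ∀ s : ℝ, (s - h / 2) • (A + (s - h / 2) • B)
        = (s - h / 2) • A + ((s - h / 2) ^ 2) • B := by
      intro s; rw [smul_add, smul_smul, sq]
    simp_rw [this]
    have hA := Continuous.intervalIntegrable (μ := MeasureTheory.volume) (u := fun s : ℝ => (s - h / 2) • A)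
      ((continuous_id.sub continuous_const).smul continuous_const) 0 h
    have hB := Continuous.intervalIntegrable (μ := MeasureTheory.volume) (u := fun s : ℝ => ((s - h / 2) ^ 2) • B)
      (((continuous_id.sub continuous_const).pow 2).smul continuous_const) 0 h
    rw [integral_add hA hB, intervalIntegral.integral_smul_const, intervalIntegral.integral_smul_const, int1, int2,
      zero_smul, zero_add]
  have hs : 1 / h * (h ^ 3 / 12) * h = h ^ 3 / 12 := by field_simp
  rw [e1, e2]
  rw [Ring.lie_def, Ring.lie_def, smul_mul_smul_comm, smul_mul_smul_comm,
    mul_comm h (h ^ 3 / 12), ← smul_sub, smul_smul, ← mul_assoc, hs]
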